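/- arXiv:1302.3783 — 2 statements merged into one kernel-verified Lean document; each statement's English description precedes it below -/
import Mathlib

section
/- For two words u, v over a finite alphabet, each of length at least k−1, u and v are k-Abelian equivalent if and only if |u|_x = |v|_x for all words x of length exactly k, and u and v have the same prefix of length k−1 and the same suffix of length k−1. -/
/-- Number of occurrences of `x` as a factor of `u`. -/
def occ {α : Type*} [DecidableEq α] (u x : List α) : ℕ :=
  ((List.range (u.length + 1)).filter (fun i => decide (x <+: u.drop i))).length

/-- `k`-Abelian equivalence: same number of occurrences of every word of length at most `k`. -/
def KAbEq {α : Type*} [DecidableEq α] (k : ℕ) (u v : List α) : Prop :=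
  ∀ x : List α, x.length ≤ k → occ u x = occ v x

/-- The factor of the infinite word `w` of length `n` starting at position `i`. -/
def factorAt {α : Type*} (w : ℕ → α) (i n : ℕ) : List α :=
  (List.range n).map (fun j => w (i + j))

/-- `k`-Abelian complexity: the number of `k`-Abelian classes of length-`n` factors of `w`. -/
noncomputable def rho {α : Type*} [DecidableEq α] (k : ℕ) (w : ℕ → α) (n : ℕ) : ℕ :=
  Set.ncard { C : Set (List α) | ∃ i : ℕ,
    C = { v | (∃ j : ℕ, v = factorAt w j n) ∧ KAbEq k v (factorAt w i n) } }

-- basic bound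
lemma occ_mem_bound {α : Type*} (u x : List α) {i : ℕ} (hi : i ≤ u.length)
    (h : x <+: u.drop i) : i + x.length ≤ u.length := by
  have := h.length_le
  simp [List.length_drop] at this
  omega

lemma occ_eq_card {α : Type*} [DecidableEq α] (u x : List α) :
    occ u x = ((Finset.range (u.length+1)).filter (fun i => x <+: u.drop i)).card := rfl

lemma occ_right {α : Type*} [Fintype α] [DecidableEq α] (u x : List α) :
    occ u x = (∑ a : α, occ u (x ++ [a])) + (if x <:+ u then 1 else 0) := by
  classical
  set n := u.length with hn
  rw [occ_eq_card]
  set S : Finset ℕ := (Finset.range (n+1)).filter (fun i => x <+: u.drop i) with hS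
  set T : α → Finset ℕ := fun a => (Finset.range (n+1)).filter (fun i => (x ++ [a]) <+: u.drop i) with hT
  have hTsub : ∀ a i, i ∈ T a → i ∈ S ∧ i + x.length < n := by
    intro a i hi
    simp only [hT, Finset.mem_filter, Finset.mem_range] at hi
    obtain ⟨hir, hip⟩ := hi
    have hb := occ_mem_bound u (x ++ [a]) (by omega) hip
    simp at hb
    constructor
    · simp only [hS, Finset.mem_filter, Finset.mem_range]
      exact ⟨hir, ((x.prefix_append [a]).trans hip)⟩
    · omega
  have hsplit : S = (S.filter (fun i => i + x.length < n)) ∪ (S.filter (fun i => ¬ i + x.length < n)) :=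
    (Finset.filter_union_filter_not_eq _ S).symm
  have hdisj : Disjoint (S.filter (fun i => i + x.length < n)) (S.filter (fun i => ¬ i + x.length < n)) :=
    Finset.disjoint_filter_filter_not _ _ _
  have h1 : S.filter (fun i => i + x.length < n) = Finset.univ.biUnion T := by
    ext i
    simp only [Finset.mem_filter, Finset.mem_biUnion, Finset.mem_univ, true_and]
    constructor
    · rintro ⟨hiS, hlt⟩
      simp only [hS, Finset.mem_filter, Finset.mem_range] at hiS
      obtain ⟨hir, hip⟩ := hiS
      obtain ⟨t, ht⟩ := hip
      have htlen : t.length ≥ 1 := by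
        have : (u.drop i).length = n - i := by simp [List.length_drop]; rfl
        have := congrArg List.length ht
        simp at this
        omega
      cases t with
      | nil => simp at htlen
      | cons a t' =>
        refine ⟨a, ?_⟩
        simp only [hT, Finset.mem_filter, Finset.mem_range]
        refine ⟨by omega, ⟨t', by simpa using ht⟩⟩
    · rintro ⟨a, ha⟩
      exact hTsub a i ha
  have h2 : S.filter (fun i => ¬ i + x.length < n) =
      (if x <:+ u then ({n - x.length} : Finset ℕ) else ∅) := by
    ext i
    simp only [Finset.mem_filter]
    constructor
    · rintro ⟨hiS, hnlt⟩
      simp only [hS, Finset.mem_filter, Finset.mem_range] at hiS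
      obtain ⟨hir, hip⟩ := hiS
      have hb := occ_mem_bound u x (by omega) hip
      have heq : i + x.length = n := by omega
      have hlen : (u.drop i).length = x.length := by simp [List.length_drop]; omega
      have hxeq : x = u.drop i := List.IsPrefix.eq_of_length hip hlen.symm
      have hsuf : x <:+ u := hxeq ▸ List.drop_suffix i u
      rw [if_pos hsuf]
      simp
      omega
    · intro hi
      by_cases hsuf : x <:+ u
      · rw [if_pos hsuf] at hi
        simp at hi
        subst hi
        have hxl : x.length ≤ n := hsuf.length_le
        have : u.drop (n - x.length) = x := by
          have := List.suffix_iff_eq_drop.mp hsuf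
          exact this.symm
        constructor
        · simp only [hS, Finset.mem_filter, Finset.mem_range]
          exact ⟨by omega, by rw [this]⟩
        · omega
      · rw [if_neg hsuf] at hi
        simp at hi
  have hdisjT : ∀ a ∈ (Finset.univ : Finset α), ∀ b ∈ Finset.univ, a ≠ b → Disjoint (T a) (T b) := by
    intro a _ b _ hab
    rw [Finset.disjoint_left]
    intro i hia hib
    simp only [hT, Finset.mem_filter] at hia hib
    have := List.prefix_of_prefix_length_le hia.2 hib.2 (by simp)
    have heq := List.IsPrefix.eq_of_length this (by simp)
    exact hab (by simpa using heq)
  conv_lhs => rw [hsplit]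
  rw [Finset.card_union_of_disjoint hdisj, h1, h2, Finset.card_biUnion hdisjT]
  congr 1
  · split <;> simp

lemma occ_left {α : Type*} [Fintype α] [DecidableEq α] (u x : List α) :
    occ u x = (∑ a : α, occ u (a :: x)) + (if x <+: u then 1 else 0) := by
  classical
  set n := u.length with hn
  rw [occ_eq_card]
  set S : Finset ℕ := (Finset.range (n+1)).filter (fun i => x <+: u.drop i) with hS
  set T : α → Finset ℕ := fun a => (Finset.range (n+1)).filter (fun i => (a :: x) <+: u.drop i) with hT
  have hsplit : S = (S.filter (fun i => 0 < i)) ∪ (S.filter (fun i => ¬ 0 < i)) :=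
    (Finset.filter_union_filter_not_eq _ S).symm
  have hdisj : Disjoint (S.filter (fun i => 0 < i)) (S.filter (fun i => ¬ 0 < i)) :=
    Finset.disjoint_filter_filter_not _ _ _
  have hTmem : ∀ a j, j ∈ T a → ∃ hjn : j < n, u[j] = a ∧ x <+: u.drop (j+1) := by
    intro a j hj
    simp only [hT, Finset.mem_filter, Finset.mem_range] at hj
    obtain ⟨hjr, hjp⟩ := hj
    have hlen := hjp.length_le
    simp [List.length_drop] at hlen
    have hjn : j < n := by omega
    have hd : u.drop j = u.get ⟨j, hjn⟩ :: u.drop (j+1) := by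
      simpa using List.drop_eq_getElem_cons hjn
    rw [hd, List.cons_prefix_cons] at hjp
    exact ⟨hjn, by simpa using hjp.1.symm, hjp.2⟩
  have h1 : S.filter (fun i => 0 < i) = Finset.univ.biUnion (fun a => (T a).image (· + 1)) := by
    ext i
    simp only [Finset.mem_filter, Finset.mem_biUnion, Finset.mem_univ, true_and,
      Finset.mem_image]
    constructor
    · rintro ⟨hiS, hpos⟩
      simp only [hS, Finset.mem_filter, Finset.mem_range] at hiS
      obtain ⟨hir, hip⟩ := hiS
      have hjn : i - 1 < n := by omega
      refine ⟨u.get ⟨i - 1, by omega⟩, i - 1, ?_, by omega⟩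
      simp only [hT, Finset.mem_filter, Finset.mem_range]
      refine ⟨by omega, ?_⟩
      have hd : u.drop (i-1) = u.get ⟨i-1, hjn⟩ :: u.drop i := by
        have := List.drop_eq_getElem_cons hjn
        simpa [Nat.sub_add_cancel hpos] using this
      rw [hd, List.cons_prefix_cons]
      exact ⟨rfl, hip⟩
    · rintro ⟨a, j, hj, rfl⟩
      obtain ⟨hjn, _, hjp⟩ := hTmem a j hj
      refine ⟨?_, by omega⟩
      simp only [hS, Finset.mem_filter, Finset.mem_range]
      exact ⟨by omega, hjp⟩
  have h2 : S.filter (fun i => ¬ 0 < i) = (if x <+: u then ({0} : Finset ℕ) else ∅) := by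
    ext i
    simp only [Finset.mem_filter, hS, Finset.mem_range, not_lt, Nat.le_zero]
    constructor
    · rintro ⟨⟨_, hip⟩, rfl⟩
      simp at hip
      rw [if_pos hip]; simp
    · intro hi
      by_cases hp : x <+: u
      · rw [if_pos hp] at hi; simp at hi; subst hi
        exact ⟨⟨by omega, by simpa using hp⟩, rfl⟩
      · rw [if_neg hp] at hi; simp at hi
  have hdisjT : ∀ a ∈ (Finset.univ : Finset α), ∀ b ∈ Finset.univ, a ≠ b →
      Disjoint ((T a).image (· + 1)) ((T b).image (· + 1)) := by
    intro a _ b _ hab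
    rw [Finset.disjoint_left]
    rintro i hia hib
    simp only [Finset.mem_image] at hia hib
    obtain ⟨j, hj, hji⟩ := hia
    obtain ⟨j', hj', hji'⟩ := hib
    have : j = j' := by omega
    subst this
    obtain ⟨_, ha, _⟩ := hTmem a j hj
    obtain ⟨_, hb, _⟩ := hTmem b j hj'
    exact hab (ha ▸ hb ▸ rfl)
  conv_lhs => rw [hsplit]
  rw [Finset.card_union_of_disjoint hdisj, h1, h2, Finset.card_biUnion hdisjT]
  congr 1
  · refine Finset.sum_congr rfl (fun a _ => ?_)
    rw [Finset.card_image_of_injective _ (fun p q h => by omega)]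
    exact (occ_eq_card u (a :: x)).symm
  · split <;> simp

theorem stmt4 {α : Type*} [Fintype α] [DecidableEq α] (k : ℕ) (u v : List α)
    (hu : k - 1 ≤ u.length) (hv : k - 1 ≤ v.length) :
    KAbEq k u v ↔
      (∀ x : List α, x.length = k → occ u x = occ v x) ∧
      u.take (k - 1) = v.take (k - 1) ∧
      u.drop (u.length - (k - 1)) = v.drop (v.length - (k - 1)) := by
  rcases Nat.eq_zero_or_pos k with hk0 | hkpos
  · subst hk0
    simp only [Nat.zero_sub, List.take_zero, Nat.sub_zero, List.drop_length]
    constructor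
    · intro h
      exact ⟨fun x hx => h x hx.le, trivial, trivial⟩
    · rintro ⟨h1, -, -⟩ x hx
      exact h1 x (Nat.le_zero.mp hx)
  · set m := k - 1 with hmdef
    have hm : m + 1 = k := by omega
    have hum : m ≤ u.length := hu
    have hvm : m ≤ v.length := hv
    constructor
    · intro h
      refine ⟨fun x hx => h x hx.le, ?_, ?_⟩
      · -- prefixes agree
        set p := u.take m with hp
        have hplen : p.length = m := by simp [hp, List.length_take]; omega
        have hocc : occ u p = occ v p := h p (by omega)
        have hsum : (∑ a : α, occ u (a :: p)) = ∑ a : α, occ v (a :: p) :=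
          Finset.sum_congr rfl fun a _ => h (a :: p) (by simp [hplen]; omega)
        have e1 := occ_left u p
        have e2 := occ_left v p
        have hpu : p <+: u := List.take_prefix m u
        by_cases hpv : p <+: v
        · have := List.prefix_iff_eq_take.mp hpv
          rw [hplen] at this
          exact this
        · exfalso
          rw [if_pos hpu, hsum] at e1
          rw [if_neg hpv] at e2
          rw [e1, e2] at hocc
          simp at hocc
      · -- suffixes agree
        set s := u.drop (u.length - m) with hs
        have hslen : s.length = m := by simp [hs, List.length_drop]; omega
        have hocc : occ u s = occ v s := h s (by omega)
        have hsum : (∑ a : α, occ u (s ++ [a])) = ∑ a : α, occ v (s ++ [a]) :=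
          Finset.sum_congr rfl fun a _ => h (s ++ [a]) (by simp [hslen]; omega)
        have e1 := occ_right u s
        have e2 := occ_right v s
        have hsu : s <:+ u := List.drop_suffix _ u
        by_cases hsv : s <:+ v
        · have := List.suffix_iff_eq_drop.mp hsv
          rw [hslen] at this
          exact this
        · exfalso
          rw [if_pos hsu, hsum] at e1
          rw [if_neg hsv] at e2
          rw [e1, e2] at hocc
          simp at hocc
    · rintro ⟨hk, hpre, hsuf⟩
      have hlen_du : (u.drop (u.length - m)).length = m := by
        simp [List.length_drop]; omega
      have hlen_dv : (v.drop (v.length - m)).length = m := by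
        simp [List.length_drop]; omega
      have hsufiff : ∀ x : List α, x.length ≤ m → (x <:+ u ↔ x <:+ v) := by
        intro x hx
        constructor
        · intro hxu
          have h1 : x <:+ u.drop (u.length - m) :=
            List.suffix_of_suffix_length_le hxu (List.drop_suffix _ u) (by omega)
          rw [hsuf] at h1
          exact h1.trans (List.drop_suffix _ v)
        · intro hxv
          have h1 : x <:+ v.drop (v.length - m) :=
            List.suffix_of_suffix_length_le hxv (List.drop_suffix _ v) (by omega)
          rw [← hsuf] at h1
          exact h1.trans (List.drop_suffix _ u)
      have key : ∀ j, ∀ x : List α, x.length + j = k → occ u x = occ v x := by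
        intro j
        induction j with
        | zero => intro x hx; exact hk x (by omega)
        | succ j ih =>
          intro x hx
          have hsum : (∑ a : α, occ u (x ++ [a])) = ∑ a : α, occ v (x ++ [a]) :=
            Finset.sum_congr rfl fun a _ => ih (x ++ [a]) (by simp; omega)
          have hind : (if x <:+ u then 1 else 0) = (if x <:+ v then 1 else 0) := by
            have hiff := hsufiff x (by omega)
            by_cases hc : x <:+ u
            · rw [if_pos hc, if_pos (hiff.mp hc)]
            · rw [if_neg hc, if_neg (fun hc' => hc (hiff.mpr hc'))]
          rw [occ_right u x, occ_right v x, hsum, hind]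
      intro x hx
      exact key (k - x.length) x (by omega)
end

section
/- For the period-doubling word S (fixed point of 0 ↦ 01, 1 ↦ 00), the Abelian complexity satisfies ρ^{(1)}_S(2^m) = 2 for every m ≥ 0. -/
theorem pref_single (a b : Bool) (t : List Bool) : [a] <+: b::t ↔ a = b := by
  simp [List.cons_prefix_cons]

theorem occ_single (u : List Bool) (a : Bool) : occ u [a] = u.count a := by
  induction u with
  | nil => simp [occ]
  | cons b t ih =>
    simp only [occ, List.length_cons, List.range_succ_eq_map] at *
    rw [List.filter_cons]
    simp only [List.drop_zero, pref_single, List.filter_map, List.count_cons,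
      Function.comp_def, Nat.succ_eq_add_one, List.drop_succ_cons]
    rcases eq_or_ne a b with rfl | h
    · simp [ih, Nat.add_comm]
    · simp [h, Ne.symm h, ih]

theorem occ_nil (u : List Bool) : occ u [] = u.length + 1 := by
  simp [occ, List.filter_eq_self]

theorem count_tf (v : List Bool) : v.count true + v.count false = v.length := by
  induction v with
  | nil => simp
  | cons b t ih => cases b <;> simp [List.count_cons, ih] <;> omega

theorem kabeq_iff (u v : List Bool) :
    KAbEq 1 u v ↔ u.length = v.length ∧ u.count true = v.count true := by
  constructor
  · intro h
    have h0 := h [] (by simp)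
    have h1 := h [true] (by simp)
    rw [occ_nil, occ_nil] at h0
    rw [occ_single, occ_single] at h1
    exact ⟨by omega, h1⟩
  · rintro ⟨hl, hc⟩ x hx
    interval_cases hlen : x.length
    · rw [List.length_eq_zero_iff] at hlen; subst hlen
      rw [occ_nil, occ_nil, hl]
    · obtain ⟨a, ha⟩ : ∃ a, x = [a] := by
        cases x with
        | nil => simp at hlen
        | cons b t => exact ⟨b, by simpa using List.length_eq_zero_iff.mp (by simpa using hlen)⟩
      subst ha
      rw [occ_single, occ_single]
      cases a
      · have := count_tf u; have := count_tf v; omega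
      · exact hc

theorem factorAt_length {α : Type*} (w : ℕ → α) (i n : ℕ) : (factorAt w i n).length = n := by
  simp [factorAt]

theorem factorAt_succ {α : Type*} (w : ℕ → α) (i n : ℕ) :
    factorAt w i (n+1) = factorAt w i n ++ [w (i+n)] := by
  simp [factorAt, List.range_succ]

theorem pd_key (S : ℕ → Bool)
    (hS0 : ∀ n, S (2 * n) = false) (hS1 : ∀ n, S (2 * n + 1) = !S n) :
    ∀ n i, (factorAt S i (2*n)).count true + (factorAt S (i/2) n).count true = n := by
  intro n
  induction n with
  | zero => intro i; simp [factorAt]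
  | succ n ih =>
    intro i
    have h2 : 2*(n+1) = 2*n + 1 + 1 := by ring
    rw [h2, factorAt_succ, factorAt_succ, factorAt_succ]
    simp only [List.count_append, List.count_singleton']
    have H := ih i
    rcases Nat.even_or_odd i with ⟨a, rfl⟩ | ⟨a, rfl⟩
    · have hdiv : (a + a) / 2 = a := by omega
      rw [hdiv] at H ⊢
      have e1 : a + a + 2 * n = 2 * (a + n) := by ring
      have e2 : a + a + (2 * n + 1) = 2 * (a + n) + 1 := by ring
      rw [e1, e2, hS0, hS1]
      cases h : S (a + n) <;> simp [h] <;> omega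
    · have hdiv : (2 * a + 1) / 2 = a := by omega
      rw [hdiv] at H ⊢
      have e1 : 2 * a + 1 + 2 * n = 2 * (a + n) + 1 := by ring
      have e2 : 2 * a + 1 + (2 * n + 1) = 2 * (a + n + 1) := by ring
      rw [e1, e2, hS0, hS1]
      cases h : S (a + n) <;> simp [h] <;> omega

theorem pd_range (S : ℕ → Bool)
    (hS0 : ∀ n, S (2 * n) = false) (hS1 : ∀ n, S (2 * n + 1) = !S n) :
    ∀ m, ∃ a, Set.range (fun i => (factorAt S i (2^m)).count true) = {a, a+1} := by
  intro m
  induction m with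
  | zero =>
    refine ⟨0, ?_⟩
    have hs0 : S 0 = false := by have := hS0 0; simpa using this
    have hs1 : S 1 = true := by have := hS1 0; simp at this; simp [this, hs0]
    ext v
    simp only [Set.mem_range, Set.mem_insert_iff, Set.mem_singleton_iff]
    constructor
    · rintro ⟨i, rfl⟩
      have : factorAt S i (2^0) = [S i] := by rw [factorAt, show List.range (2^0) = [0] from rfl]; simp
      rw [this]
      cases S i <;> simp
    · rintro (rfl | rfl)
      · exact ⟨0, by rw [factorAt, show List.range (2^0) = [0] from rfl]; simp [hs0]⟩
      · exact ⟨1, by rw [factorAt, show List.range (2^0) = [0] from rfl]; simp [hs1]⟩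
  | succ m ih =>
    obtain ⟨a, hA⟩ := ih
    have hle : ∀ i, (factorAt S i (2^m)).count true ≤ 2^m := by
      intro i
      calc (factorAt S i (2^m)).count true ≤ (factorAt S i (2^m)).length :=
            List.count_le_length
        _ = 2^m := factorAt_length _ _ _
    have hmem : ∀ v, v ∈ ({a, a+1} : Set ℕ) → ∃ j, (factorAt S j (2^m)).count true = v := by
      intro v hv
      rw [← hA] at hv
      exact hv
    obtain ⟨j1, hj1⟩ := hmem (a+1) (by simp)
    have ha1 : a + 1 ≤ 2^m := hj1 ▸ hle j1
    obtain ⟨j0, hj0⟩ := hmem a (by simp)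
    have hkey : ∀ i, (factorAt S i (2^(m+1))).count true
        + (factorAt S (i/2) (2^m)).count true = 2^m := by
      intro i
      have := pd_key S hS0 hS1 (2^m) i
      have h2 : 2^(m+1) = 2*2^m := by ring
      rw [h2]; exact this
    refine ⟨2^m - (a+1), ?_⟩
    have hsub : 2^m - (a+1) + 1 = 2^m - a := by omega
    ext v
    simp only [Set.mem_range, Set.mem_insert_iff, Set.mem_singleton_iff, hsub]
    constructor
    · rintro ⟨i, rfl⟩
      have hin : (factorAt S (i/2) (2^m)).count true ∈ ({a, a+1} : Set ℕ) := by
        rw [← hA]; exact ⟨i/2, rfl⟩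
      have hk := hkey i
      rcases hin with h | h <;> rw [h] at hk
      · right; omega
      · left; omega
    · rintro (rfl | rfl)
      · refine ⟨2*j1, ?_⟩
        have hk := hkey (2*j1)
        have hd : 2*j1/2 = j1 := by omega
        rw [hd, hj1] at hk
        omega
      · refine ⟨2*j0, ?_⟩
        have hk := hkey (2*j0)
        have hd : 2*j0/2 = j0 := by omega
        rw [hd, hj0] at hk
        omega

theorem stmt7 (S : ℕ → Bool)
    (hS0 : ∀ n, S (2 * n) = false) (hS1 : ∀ n, S (2 * n + 1) = !S n)
    (m : ℕ) :
    rho 1 S (2 ^ m) = 2 := by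
  set n := 2^m with hn
  obtain ⟨a, hA⟩ := pd_range S hS0 hS1 m
  set A : ℕ → Set (List Bool) :=
    fun v => {w | (∃ j, w = factorAt S j n) ∧ w.count true = v} with hAdef
  have hclass : ∀ i, { v | (∃ j : ℕ, v = factorAt S j n) ∧ KAbEq 1 v (factorAt S i n) }
      = A ((factorAt S i n).count true) := by
    intro i
    ext v
    simp only [hAdef, Set.mem_setOf_eq, and_congr_right_iff]
    rintro ⟨j, rfl⟩
    rw [kabeq_iff]
    simp [factorAt_length]
  have hmem : ∀ v, v ∈ ({a, a+1} : Set ℕ) → ∃ j, (factorAt S j n).count true = v := by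
    intro v hv; rw [← hA] at hv; exact hv
  obtain ⟨j0, hj0⟩ := hmem a (by simp)
  obtain ⟨j1, hj1⟩ := hmem (a+1) (by simp)
  have hset : { C : Set (List Bool) | ∃ i : ℕ,
      C = { v | (∃ j : ℕ, v = factorAt S j n) ∧ KAbEq 1 v (factorAt S i n) } }
      = {A a, A (a+1)} := by
    ext C
    simp only [Set.mem_setOf_eq, Set.mem_insert_iff, Set.mem_singleton_iff]
    constructor
    · rintro ⟨i, rfl⟩
      rw [hclass i]
      have hin : (factorAt S i n).count true ∈ ({a, a+1} : Set ℕ) := by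
        rw [← hA]; exact ⟨i, rfl⟩
      rcases hin with h | h
      · left; rw [h]
      · right; rw [h]
    · rintro (rfl | rfl)
      · exact ⟨j0, by rw [hclass j0, hj0]⟩
      · exact ⟨j1, by rw [hclass j1, hj1]⟩
  have hne : A a ≠ A (a+1) := by
    intro h
    have h0 : factorAt S j0 n ∈ A a := ⟨⟨j0, rfl⟩, hj0⟩
    rw [h] at h0
    have := h0.2
    omega
  rw [rho, hset, Set.ncard_pair hne]
end
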